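/- For all integers t ≥ 2 and ℓ ≥ 2, the multicolor Ramsey number satisfies r(t;ℓ) ≥ c_{t,t}^{-(ℓ-2)/t} · 2^{(t-1)/2}, where c_{t,t} is the infimum over K_t-free graphs G of the probability that t i.i.d. uniform random vertices of G (with repetition allowed) form an independent set. -/

import Mathlib

open Filter

/-- Probability that `t` i.i.d. uniform vertices of `G` (with repetition) form an independent
set: the fraction of functions `Fin t → V` whose image is independent in `G`. -/
noncomputable def indepProb (t : ℕ) {V : Type} [Fintype V] (G : SimpleGraph V) : ℝ :=
  (Nat.card {f : Fin t → V // ∀ i j, ¬ G.Adj (f i) (f j)} : ℝ) / (Fintype.card V : ℝ) ^ t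

/-- `c_{t,t}`: the infimum over all (nonempty, finite) `K_t`-free graphs of the probability that
`t` i.i.d. uniform vertices form an independent set. -/
noncomputable def cParam (t : ℕ) : ℝ :=
  sInf { q : ℝ | ∃ M : ℕ, 0 < M ∧ ∃ G : SimpleGraph (Fin M), G.CliqueFree t ∧ q = indepProb t G }

/-- Every `ℓ`-coloring of the edges of `K_N` has a monochromatic `K_t`. -/
def ramseyProp (N t ℓ : ℕ) : Prop :=
  ∀ c : Sym2 (Fin N) → Fin ℓ, ∃ i : Fin ℓ, ∃ S : Finset (Fin N), S.card = t ∧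
    ∀ x ∈ S, ∀ y ∈ S, x ≠ y → c s(x, y) = i

/-- The multicolor Ramsey number `r(t; ℓ)`. -/
noncomputable def multiRamsey (t ℓ : ℕ) : ℕ := sInf {N | ramseyProp N t ℓ}

section Aux

open Function

lemma ramsey_seq (ℓ : ℕ) (hℓ : 0 < ℓ) (n : ℕ) (c : Sym2 (Fin n) → Fin ℓ) (m : ℕ) :
    ∀ (A : Finset (Fin n)), (ℓ+1)^m ≤ A.card →
    ∃ (x : Fin m → Fin n) (f : Fin m → Fin ℓ), (∀ i, x i ∈ A) ∧
      (∀ i j : Fin m, i < j → x i ≠ x j ∧ c s(x i, x j) = f i) := by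
  induction m with
  | zero =>
    intro A _
    exact ⟨Fin.elim0, Fin.elim0, fun i => i.elim0, fun i => i.elim0⟩
  | succ m ih =>
    intro A hA
    have hAne : A.Nonempty := by
      rw [← Finset.card_pos]
      calc 0 < (ℓ+1)^(m+1) := Nat.pow_pos (by omega)
        _ ≤ A.card := hA
    obtain ⟨a, ha⟩ := hAne
    have h1 : 1 ≤ (ℓ+1)^m := Nat.one_le_pow _ _ (by omega)
    have : Nonempty (Fin ℓ) := ⟨⟨0, hℓ⟩⟩
    have hcard : (Finset.univ : Finset (Fin ℓ)).card * (ℓ+1)^m ≤ (A.erase a).card := by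
      rw [Finset.card_erase_of_mem ha, Finset.card_univ, Fintype.card_fin, mul_comm]
      have h2 : (ℓ+1)^(m+1) = (ℓ+1)^m * ℓ + (ℓ+1)^m := by ring
      omega
    obtain ⟨i₀, -, hfib⟩ := Finset.exists_le_card_fiber_of_mul_le_card_of_maps_to
      (f := fun v => c s(a, v)) (fun x _ => Finset.mem_univ _) Finset.univ_nonempty hcard
    obtain ⟨x', f', hmem, hx⟩ := ih _ hfib
    refine ⟨Fin.cons a x', Fin.cons i₀ f', ?_, ?_⟩
    · intro i
      refine Fin.cases ?_ ?_ i
      · exact ha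
      · intro j
        have := hmem j
        simp only [Finset.mem_filter, Finset.mem_erase] at this
        simpa using this.1.2
    · intro i j hij
      induction j using Fin.cases with
      | zero => exact absurd hij (by simp)
      | succ j' =>
        induction i using Fin.cases with
        | zero =>
          have hb := hmem j'
          simp only [Finset.mem_filter, Finset.mem_erase] at hb
          simp only [Fin.cons_zero, Fin.cons_succ]
          exact ⟨fun h => hb.1.1 h.symm, hb.2⟩
        | succ i' =>
          have hij' : i' < j' := by simpa using hij
          simpa using hx i' j' hij'

lemma ramsey_exists (t ℓ : ℕ) (hℓ : 0 < ℓ) : ∃ N, ramseyProp N t ℓ := by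
  set m := ℓ * (t-1) + 1 with hm
  refine ⟨(ℓ+1)^m, fun c => ?_⟩
  have : Nonempty (Fin ℓ) := ⟨⟨0, hℓ⟩⟩
  obtain ⟨x, f, -, hx⟩ := ramsey_seq ℓ hℓ _ c m Finset.univ
    (by simp)
  have xinj : Function.Injective x := by
    intro i j h
    by_contra hne
    rcases lt_or_gt_of_ne hne with hlt | hlt
    · exact (hx i j hlt).1 h
    · exact (hx j i hlt).1 h.symm
  obtain ⟨i₀, -, hfib⟩ := Finset.exists_lt_card_fiber_of_mul_lt_card_of_maps_to
    (s := Finset.univ) (f := f) (t := Finset.univ) (n := t - 1) (fun x _ => Finset.mem_univ _)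
    (by simp only [Finset.card_univ, Fintype.card_fin, hm]; omega)
  obtain ⟨T, hT, hTcard⟩ := Finset.exists_subset_card_eq
    (s := Finset.univ.filter (fun i => f i = i₀)) (n := t) (by omega)
  refine ⟨i₀, T.image x, ?_, ?_⟩
  · rw [Finset.card_image_of_injective _ xinj, hTcard]
  · intro u hu v hv huv
    simp only [Finset.mem_image] at hu hv
    obtain ⟨p, hp, rfl⟩ := hu
    obtain ⟨q, hq, rfl⟩ := hv
    have hpq : p ≠ q := fun h => huv (by rw [h])
    have hfp : f p = i₀ := (Finset.mem_filter.mp (hT hp)).2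
    have hfq : f q = i₀ := (Finset.mem_filter.mp (hT hq)).2
    rcases lt_or_gt_of_ne hpq with hlt | hlt
    · rw [(hx p q hlt).2, hfp]
    · rw [Sym2.eq_swap, (hx q p hlt).2, hfq]
noncomputable section
open scoped Classical

/-- Restriction equivalence: functions on β with a condition on the pullback along an
injective g. -/
def compEquiv {α β γ : Type*} (g : α → β) (hg : Injective g) (P : (α → γ) → Prop) :
    {f : β → γ // P (f ∘ g)} ≃ {h : α → γ // P h} × (((Set.range g)ᶜ : Set β) → γ) where
  toFun f := ⟨⟨f.1 ∘ g, f.2⟩, fun b => f.1 b.1⟩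
  invFun p := ⟨fun b => if h : ∃ a, g a = b then p.1.1 h.choose else p.2 ⟨b, by simpa [Set.range] using h⟩, by
    have : (fun b => if h : ∃ a, g a = b then p.1.1 h.choose else p.2 ⟨b, by simpa [Set.range] using h⟩) ∘ g = p.1.1 := by
      funext a
      have h : ∃ a', g a' = g a := ⟨a, rfl⟩
      simp only [comp_apply, dif_pos h]
      exact congrArg p.1.1 (hg h.choose_spec)
    rw [this]; exact p.1.2⟩
  left_inv f := by
    ext b
    simp only
    by_cases h : ∃ a, g a = b
    · rw [dif_pos h]; exact congrArg f.1 h.choose_spec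
    · rw [dif_neg h]
  right_inv p := by
    ext x
    · simp only [comp_apply]
      have h : ∃ a', g a' = g x := ⟨x, rfl⟩
      rw [dif_pos h]
      exact congrArg p.1.1 (hg h.choose_spec)
    · have hx : ¬ ∃ a, g a = x.1 := fun hc => x.2 hc
      simp only
      rw [dif_neg hx]

lemma card_comp {α β γ : Type*} [Fintype α] [Fintype β] [Fintype γ]
    (g : α → β) (hg : Injective g) (P : (α → γ) → Prop) :
    Nat.card {f : β → γ // P (f ∘ g)} =
      Nat.card {h : α → γ // P h} * Fintype.card γ ^ (Fintype.card β - Fintype.card α) := by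
  rw [Nat.card_congr (compEquiv g hg P), Nat.card_prod]
  congr 1
  rw [Nat.card_fun, Nat.card_eq_fintype_card, Nat.card_eq_fintype_card,
    Fintype.card_compl_set, Set.card_range_of_injective hg]

lemma card_pi_subtype {X : Type*} [Fintype X] (k : ℕ) (Q : X → Prop) :
    Nat.card {φ : Fin k → X // ∀ j, Q (φ j)} = Nat.card {x : X // Q x} ^ k := by
  rw [Nat.card_congr (Equiv.subtypePiEquivPi (p := fun _ : Fin k => Q)), Nat.card_pi]
  simp

lemma card_const_fun {D : Type*} [Fintype D] (b : Bool) :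
    Nat.card {h : D → Bool // ∀ x, h x = b} = 1 := by
  rw [Nat.card_eq_one_iff_unique]
  constructor
  · constructor
    intro h1 h2
    ext x
    rw [h1.2 x, h2.2 x]
  · exact ⟨fun _ => b, fun _ => rfl⟩

/-- The coloring built from `k` graph coordinates plus one random 2-coloring. -/
def col {k N M : ℕ} (G : SimpleGraph (Fin M))
    (ω : (Fin k → Fin N → Fin M) × (Sym2 (Fin N) → Bool)) (p : Sym2 (Fin N)) : Fin (k+2) :=
  match Fin.find? (fun j : Fin k => decide (Sym2.map (ω.1 j) p ∈ G.edgeSet)) with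
  | some j => j.castLE (by omega)
  | none => if ω.2 p then ⟨k+1, by omega⟩ else ⟨k, by omega⟩

lemma col_cases {k N M : ℕ} (G : SimpleGraph (Fin M))
    (ω : (Fin k → Fin N → Fin M) × (Sym2 (Fin N) → Bool)) (p : Sym2 (Fin N)) :
    (∃ j : Fin k, ((col G ω p : ℕ) = j ∧ Sym2.map (ω.1 j) p ∈ G.edgeSet)) ∨
    ((∀ j, Sym2.map (ω.1 j) p ∉ G.edgeSet) ∧
      ω.2 p = decide (((col G ω p) : ℕ) = k+1) ∧ k ≤ (col G ω p : ℕ)) := by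
  rcases hfind : Fin.find? (fun j : Fin k => decide (Sym2.map (ω.1 j) p ∈ G.edgeSet)) with _ | j
  · right
    have hcol : col G ω p = if ω.2 p then ⟨k+1, by omega⟩ else ⟨k, by omega⟩ := by
      unfold col; rw [hfind]
    refine ⟨(fun j => by simpa using Fin.eq_false_of_find?_eq_none hfind j), ?_, ?_⟩ <;>
      rw [hcol] <;> by_cases hb : ω.2 p <;> simp [hb]
  · left
    have hcol : col G ω p = j.castLE (by omega) := by
      unfold col; rw [hfind]
    exact ⟨j, by rw [hcol]; rfl, by simpa using Fin.eq_true_of_find?_eq_some hfind⟩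

abbrev BadP {t k N M : ℕ} (G : SimpleGraph (Fin M)) (g : Fin t → Fin N) (b : Bool)
    (ω : (Fin k → Fin N → Fin M) × (Sym2 (Fin N) → Bool)) : Prop :=
  (∀ j, ∀ i i' : Fin t, ¬ G.Adj (ω.1 j (g i)) (ω.1 j (g i'))) ∧
  (∀ i i' : Fin t, i ≠ i' → ω.2 s(g i, g i') = b)

lemma witness {t k N M : ℕ} {G : SimpleGraph (Fin M)} (hG : G.CliqueFree t)
    (hN : ramseyProp N t (k+2)) (ω : (Fin k → Fin N → Fin M) × (Sym2 (Fin N) → Bool)) :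
    ∃ (S : Finset (Fin N)) (b : Bool), S.card = t ∧
      ∀ g : Fin t → Fin N, Function.Injective g → (∀ i, g i ∈ S) → BadP G g b ω := by
  obtain ⟨i, S, hcard, hmono⟩ := hN (col G ω)
  by_cases hik : (i : ℕ) < k
  · exfalso
    set j₀ : Fin k := ⟨i, hik⟩ with hj₀
    have adj : ∀ x ∈ S, ∀ y ∈ S, x ≠ y → G.Adj (ω.1 j₀ x) (ω.1 j₀ y) := by
      intro x hx y hy hxy
      have hc := hmono x hx y hy hxy
      rcases col_cases G ω s(x, y) with ⟨j, hj, hadj⟩ | ⟨_, _, hge⟩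
      · have hjj : j = j₀ := Fin.ext (by rw [← hj, hc])
        rw [← hjj]
        rwa [Sym2.map_pair_eq, SimpleGraph.mem_edgeSet] at hadj
      · rw [hc] at hge; omega
    have hinj : Set.InjOn (ω.1 j₀) S := by
      intro x hx y hy hxy
      by_contra hne
      exact G.irrefl (hxy ▸ adj x hx y hy hne)
    apply hG (S.image (ω.1 j₀))
    constructor
    · rw [SimpleGraph.isClique_iff]
      intro u hu v hv huv
      simp only [Finset.coe_image, Set.mem_image, Finset.mem_coe] at hu hv
      obtain ⟨x, hx, rfl⟩ := hu
      obtain ⟨y, hy, rfl⟩ := hv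
      exact adj x hx y hy (fun h => huv (by rw [h]))
    · rw [Finset.card_image_of_injOn hinj, hcard]
  · refine ⟨S, decide ((i : ℕ) = k+1), hcard, fun g hginj hgS => ?_⟩
    constructor
    · intro j i1 i2
      by_cases h12 : g i1 = g i2
      · rw [h12]; exact G.irrefl
      · have hc := hmono _ (hgS i1) _ (hgS i2) h12
        rcases col_cases G ω s(g i1, g i2) with ⟨j', hj', _⟩ | ⟨hnone, _, _⟩
        · rw [hc] at hj'; omega
        · have := hnone j
          rwa [Sym2.map_pair_eq, SimpleGraph.mem_edgeSet] at this
    · intro i1 i2 h12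
      have hne : g i1 ≠ g i2 := fun h => h12 (hginj h)
      have hc := hmono _ (hgS i1) _ (hgS i2) hne
      rcases col_cases G ω s(g i1, g i2) with ⟨j', hj', _⟩ | ⟨_, hb, _⟩
      · rw [hc] at hj'; omega
      · rw [hb, hc]

lemma claim1 {t k N M : ℕ} {G : SimpleGraph (Fin M)} (hG : G.CliqueFree t)
    (hN : ramseyProp N t (k+2)) :
    t.factorial * Fintype.card ((Fin k → Fin N → Fin M) × (Sym2 (Fin N) → Bool)) ≤
      ∑ x ∈ (Finset.univ.filter (fun g : Fin t → Fin N => Function.Injective g)) ×ˢ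
          (Finset.univ : Finset Bool),
        (Finset.univ.filter (fun ω : (Fin k → Fin N → Fin M) × (Sym2 (Fin N) → Bool) =>
          BadP G x.1 x.2 ω)).card := by
  classical
  set T := (Finset.univ.filter (fun g : Fin t → Fin N => Function.Injective g)) ×ˢ
      (Finset.univ : Finset Bool) with hT
  have swap : ∑ x ∈ T, (Finset.univ.filter (fun ω : (Fin k → Fin N → Fin M) × (Sym2 (Fin N) → Bool) => BadP G x.1 x.2 ω)).card =
      ∑ ω : (Fin k → Fin N → Fin M) × (Sym2 (Fin N) → Bool),
        (T.filter (fun x => BadP G x.1 x.2 ω)).card := by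
    simp_rw [Finset.card_filter]
    rw [Finset.sum_comm]
  rw [swap]
  have point : ∀ ω : (Fin k → Fin N → Fin M) × (Sym2 (Fin N) → Bool),
      t.factorial ≤ (T.filter (fun x => BadP G x.1 x.2 ω)).card := by
    intro ω
    obtain ⟨S, b, hScard, hbad⟩ := witness hG hN ω
    have := Finset.card_le_card_of_injOn
      (f := fun σ : Equiv.Perm (Fin t) => ((fun i => (S.orderIsoOfFin hScard (σ i) : Fin N)), b))
      (s := Finset.univ) (t := T.filter (fun x => BadP G x.1 x.2 ω)) ?_ ?_
    · rwa [Finset.card_univ, Fintype.card_perm, Fintype.card_fin] at this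
    · intro σ _
      have hginj : Function.Injective (fun i => (S.orderIsoOfFin hScard (σ i) : Fin N)) := by
        intro a a' h
        exact σ.injective ((S.orderIsoOfFin hScard).injective (Subtype.ext h))
      rw [Finset.mem_coe, Finset.mem_filter]
      refine ⟨?_, hbad _ hginj (fun i => (S.orderIsoOfFin hScard (σ i)).2)⟩
      rw [hT, Finset.mem_product]
      exact ⟨Finset.mem_filter.mpr ⟨Finset.mem_univ _, hginj⟩, Finset.mem_univ _⟩
    · intro σ _ σ' _ h
      ext i
      have h1 := congrFun (congrArg Prod.fst h) i
      exact congrArg Fin.val ((S.orderIsoOfFin hScard).injective (Subtype.ext h1))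
  calc t.factorial * Fintype.card ((Fin k → Fin N → Fin M) × (Sym2 (Fin N) → Bool))
      = ∑ _ω : (Fin k → Fin N → Fin M) × (Sym2 (Fin N) → Bool), t.factorial := by
        rw [Finset.sum_const, Finset.card_univ, smul_eq_mul, mul_comm]
    _ ≤ _ := Finset.sum_le_sum (fun ω _ => point ω)

lemma claim2 {t k N M : ℕ} (G : SimpleGraph (Fin M)) (g : Fin t → Fin N)
    (hg : Function.Injective g) (b : Bool) :
    (Finset.univ.filter (fun ω : (Fin k → Fin N → Fin M) × (Sym2 (Fin N) → Bool) =>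
        BadP G g b ω)).card =
      (Nat.card {h : Fin t → Fin M // ∀ i i', ¬ G.Adj (h i) (h i')} * M ^ (N - t)) ^ k *
        2 ^ (Fintype.card (Sym2 (Fin N)) - t.choose 2) := by
  classical
  rw [← Fintype.card_subtype, ← Nat.card_eq_fintype_card]
  rw [Nat.card_congr (Equiv.subtypeProdEquivProd
    (p := fun φ : Fin k → Fin N → Fin M => ∀ j, ∀ i i' : Fin t, ¬ G.Adj (φ j (g i)) (φ j (g i')))
    (q := fun ψ : Sym2 (Fin N) → Bool => ∀ i i' : Fin t, i ≠ i' → ψ s(g i, g i') = b))]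
  rw [Nat.card_prod]
  congr 1
  · -- φ part
    rw [card_pi_subtype k (fun f : Fin N → Fin M => ∀ i i' : Fin t, ¬ G.Adj (f (g i)) (f (g i')))]
    congr 1
    have := card_comp g hg (fun h : Fin t → Fin M => ∀ i i', ¬ G.Adj (h i) (h i'))
    simp only [Function.comp_apply, Fintype.card_fin] at this
    rw [this]
  · -- ψ part
    set D : Finset (Sym2 (Fin N)) :=
      (Finset.univ.filter (fun p : Sym2 (Fin t) => ¬ p.IsDiag)).image (Sym2.map g) with hD
    have hDcard : D.card = t.choose 2 := by
      rw [hD, Finset.card_image_of_injective _ (Sym2.map.injective hg),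
        ← Fintype.card_subtype, Sym2.card_subtype_not_diag, Fintype.card_fin]
    have hiff : ∀ ψ : Sym2 (Fin N) → Bool,
        (∀ i i' : Fin t, i ≠ i' → ψ s(g i, g i') = b) ↔ (∀ x : {p // p ∈ D}, ψ x.1 = b) := by
      intro ψ
      constructor
      · intro h x
        obtain ⟨p, hp, hq⟩ := Finset.mem_image.mp x.2
        induction p using Sym2.ind with
        | _ i i' =>
          simp only [Finset.mem_filter, Finset.mem_univ, true_and, Sym2.mk_isDiag_iff] at hp
          rw [Sym2.map_pair_eq] at hq
          rw [← hq]
          exact h i i' hp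
      · intro h i i' hii
        exact h ⟨s(g i, g i'), Finset.mem_image.mpr ⟨s(i, i'),
          by simp [Sym2.mk_isDiag_iff, hii], Sym2.map_pair_eq g i i'⟩⟩
    rw [Nat.card_congr (Equiv.subtypeEquivRight hiff)]
    have := card_comp (Subtype.val : {p // p ∈ D} → Sym2 (Fin N)) Subtype.val_injective
      (fun h : {p // p ∈ D} → Bool => ∀ x, h x = b)
    simp only [Function.comp_apply] at this
    rw [this, card_const_fun, one_mul, Fintype.card_coe, hDcard, Fintype.card_bool]

lemma countB {t k N M : ℕ} (G : SimpleGraph (Fin M)) (hG : G.CliqueFree t)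
    (hN : ramseyProp N t (k+2)) :
    t.factorial * ((M^N)^k * 2^(Fintype.card (Sym2 (Fin N)))) ≤
      N^t * 2 * ((Nat.card {h : Fin t → Fin M // ∀ i i', ¬ G.Adj (h i) (h i')} * M^(N-t))^k *
        2^(Fintype.card (Sym2 (Fin N)) - t.choose 2)) := by
  classical
  have h1 := claim1 hG hN
  have hcardΩ : Fintype.card ((Fin k → Fin N → Fin M) × (Sym2 (Fin N) → Bool)) =
      (M^N)^k * 2^(Fintype.card (Sym2 (Fin N))) := by
    simp [Fintype.card_fun]
  rw [hcardΩ] at h1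
  refine le_trans h1 ?_
  set c := (Nat.card {h : Fin t → Fin M // ∀ i i', ¬ G.Adj (h i) (h i')} * M^(N-t))^k *
    2^(Fintype.card (Sym2 (Fin N)) - t.choose 2) with hc
  have h2 : ∑ x ∈ (Finset.univ.filter (fun g : Fin t → Fin N => Function.Injective g)) ×ˢ
      (Finset.univ : Finset Bool),
      (Finset.univ.filter (fun ω : (Fin k → Fin N → Fin M) × (Sym2 (Fin N) → Bool) =>
        BadP G x.1 x.2 ω)).card =
      ((Finset.univ.filter (fun g : Fin t → Fin N => Function.Injective g)).card * 2) * c := by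
    rw [Finset.sum_congr rfl (fun x hx => claim2 G x.1
      (Finset.mem_filter.mp (Finset.mem_product.mp hx).1).2 x.2)]
    rw [Finset.sum_const, smul_eq_mul, Finset.card_product, Finset.card_univ,
      Fintype.card_bool]
  rw [h2]
  apply Nat.mul_le_mul_right
  calc (Finset.univ.filter (fun g : Fin t → Fin N => Function.Injective g)).card * 2
      ≤ Fintype.card (Fin t → Fin N) * 2 := by
        apply Nat.mul_le_mul_right
        rw [← Finset.card_univ]
        exact Finset.card_filter_le _ _
    _ = N^t * 2 := by simp [Fintype.card_fun]

lemma countB_real {t k N M : ℕ} (ht : 2 ≤ t) (htN : t ≤ N) (hM : 0 < M)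
    (G : SimpleGraph (Fin M)) (hG : G.CliqueFree t) (hN : ramseyProp N t (k+2)) :
    (2:ℝ)^(t.choose 2) ≤ (N:ℝ)^t * (indepProb t G)^k := by
  classical
  have hC : t.choose 2 ≤ Fintype.card (Sym2 (Fin N)) := by
    rw [← Fintype.card_fin t, ← Sym2.card_subtype_not_diag]
    refine le_trans (Fintype.card_subtype_le _) ?_
    exact Fintype.card_le_of_injective _ (Sym2.map.injective (Fin.castLE_injective htN))
  have h2fact : (2:ℝ) ≤ (t.factorial : ℝ) := by
    have : Nat.factorial 2 ≤ Nat.factorial t := Nat.factorial_le ht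
    exact_mod_cast this
  have hMpos : (0:ℝ) < M := by exact_mod_cast hM
  have hcast : (t.factorial : ℝ) * (((M:ℝ)^N)^k * 2^(Fintype.card (Sym2 (Fin N)))) ≤
      (N:ℝ)^t * 2 * (((Nat.card {h : Fin t → Fin M // ∀ i i', ¬ G.Adj (h i) (h i')} : ℝ) *
        (M:ℝ)^(N-t))^k * 2^(Fintype.card (Sym2 (Fin N)) - t.choose 2)) := by
    exact_mod_cast countB (k := k) G hG hN
  set x := (M:ℝ)^(N-t) with hx
  set y := (2:ℝ)^(Fintype.card (Sym2 (Fin N)) - t.choose 2) with hy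
  set a := (Nat.card {h : Fin t → Fin M // ∀ i i', ¬ G.Adj (h i) (h i')} : ℝ) with ha
  have hMN : ((M:ℝ)^N) = x * (M:ℝ)^t := by
    have hnt : N - t + t = N := by omega
    rw [hx, ← pow_add, hnt]
  have hS2 : (2:ℝ)^(Fintype.card (Sym2 (Fin N))) = y * (2:ℝ)^(t.choose 2) := by
    have hsc : Fintype.card (Sym2 (Fin N)) - t.choose 2 + t.choose 2 =
      Fintype.card (Sym2 (Fin N)) := by omega
    rw [hy, ← pow_add, hsc]
  rw [hMN, hS2] at hcast
  have e1 : ((M:ℝ)^t)^k * 2^(t.choose 2) ≤ (N:ℝ)^t * a^k := by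
    have hpos : (0:ℝ) < x^k * y * 2 := by positivity
    refine le_of_mul_le_mul_right ?_ hpos
    calc ((M:ℝ)^t)^k * 2^(t.choose 2) * (x^k * y * 2)
        = 2 * ((x * (M:ℝ)^t)^k * (y * 2^(t.choose 2))) := by ring
      _ ≤ (t.factorial:ℝ) * ((x * (M:ℝ)^t)^k * (y * 2^(t.choose 2))) :=
          mul_le_mul_of_nonneg_right h2fact (by positivity)
      _ ≤ (N:ℝ)^t * 2 * ((a * x)^k * y) := hcast
      _ = ((N:ℝ)^t * a^k) * (x^k * y * 2) := by ring
  have hip : indepProb t G = a / (M:ℝ)^t := by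
    rw [indepProb, Fintype.card_fin, ha]
  rw [hip, div_pow, ← mul_div_assoc, le_div_iff₀ (by positivity)]
  calc (2:ℝ)^(t.choose 2) * ((M:ℝ)^t)^k = ((M:ℝ)^t)^k * 2^(t.choose 2) := by ring
    _ ≤ (N:ℝ)^t * a^k := e1
end

lemma cParam_set_nonempty (t : ℕ) (ht : 2 ≤ t) :
    ∃ q, q ∈ { q : ℝ | ∃ M : ℕ, 0 < M ∧
      ∃ G : SimpleGraph (Fin M), G.CliqueFree t ∧ q = indepProb t G } :=
  ⟨indepProb t (⊥ : SimpleGraph (Fin 1)), 1, one_pos, ⊥,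
    SimpleGraph.cliqueFree_bot ht, rfl⟩

lemma indepProb_pos {t M : ℕ} (hM : 0 < M) (G : SimpleGraph (Fin M)) :
    0 < indepProb t G := by
  rw [indepProb]
  apply div_pos
  · have : Nonempty {f : Fin t → Fin M // ∀ i j, ¬ G.Adj (f i) (f j)} :=
      ⟨⟨fun _ => ⟨0, hM⟩, fun _ _ => G.irrefl⟩⟩
    exact_mod_cast Nat.card_pos
  · rw [Fintype.card_fin]
    positivity

end Aux

/-- Sawin's reduction: `r(t;ℓ) ≥ c_{t,t}^{-(ℓ-2)/t} · 2^{(t-1)/2}`. -/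
theorem sawin_reduction (t ℓ : ℕ) (ht : 2 ≤ t) (hℓ : 2 ≤ ℓ) :
    cParam t ^ (-((ℓ : ℝ) - 2) / (t : ℝ)) * (2 : ℝ) ^ (((t : ℝ) - 1) / 2)
      ≤ (multiRamsey t ℓ : ℝ) := by
  obtain ⟨N₀, hN₀⟩ := ramsey_exists t ℓ (by omega)
  have hNmem : ramseyProp (multiRamsey t ℓ) t ℓ :=
    Nat.sInf_mem (s := {N | ramseyProp N t ℓ}) ⟨N₀, hN₀⟩
  set N := multiRamsey t ℓ with hNdef
  have htN : t ≤ N := by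
    obtain ⟨i, S, hcard, -⟩ := hNmem (fun _ => ⟨0, by omega⟩)
    have := Finset.card_le_univ S
    simp only [Finset.card_univ, Fintype.card_fin] at this
    omega
  have hNR : ramseyProp N t ((ℓ-2)+2) := by
    rw [show (ℓ-2)+2 = ℓ from by omega]; exact hNmem
  set k := ℓ - 2 with hk
  have key : ∀ (M : ℕ), 0 < M → ∀ G : SimpleGraph (Fin M), G.CliqueFree t →
      (2:ℝ)^(t.choose 2) ≤ (N:ℝ)^t * (indepProb t G)^k :=
    fun M hM G hG => countB_real ht htN hM G hG hNR
  have hNpos : (0:ℝ) < N := by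
    have : 0 < N := by omega
    exact_mod_cast this
  have ht0 : (t:ℝ) ≠ 0 := by
    have : (0:ℝ) < t := by exact_mod_cast (by omega : 0 < t)
    exact this.ne'
  have hdvd : 2 ∣ t * (t - 1) := by
    rcases Nat.even_or_odd t with he | ho
    · exact Dvd.dvd.mul_right he.two_dvd _
    · exact Dvd.dvd.mul_left (Nat.Odd.sub_odd ho odd_one).two_dvd _
  have h2c : ((t.choose 2 : ℕ) : ℝ) = (t:ℝ) * ((t:ℝ)-1) / 2 := by
    rw [Nat.choose_two_right, Nat.cast_div hdvd (by norm_num), Nat.cast_mul,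
      Nat.cast_sub (by omega)]
    norm_num
  set β := (2:ℝ) ^ (((t:ℝ)-1)/2) with hβ
  have hβpos : 0 < β := Real.rpow_pos_of_pos two_pos _
  have hβt : β ^ ((t:ℝ)) = (2:ℝ) ^ (t.choose 2) := by
    rw [hβ, ← Real.rpow_natCast (2:ℝ) (t.choose 2),
      ← Real.rpow_mul (by norm_num : (0:ℝ) ≤ 2)]
    congr 1
    rw [h2c]; ring
  rcases Nat.eq_or_lt_of_le hℓ with hl2 | hl3
  · -- ℓ = 2
    have hk0 : k = 0 := by omega
    have hexp : -((ℓ:ℝ) - 2)/(t:ℝ) = 0 := by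
      rw [← hl2]; norm_num
    rw [hexp, Real.rpow_zero, one_mul]
    have hkey := key 1 one_pos ⊥ (SimpleGraph.cliqueFree_bot ht)
    rw [hk0, pow_zero, mul_one] at hkey
    have hpow : β ^ ((t:ℝ)) ≤ (N:ℝ) ^ ((t:ℝ)) := by
      rw [hβt, Real.rpow_natCast]; exact hkey
    exact (Real.rpow_le_rpow_iff hβpos.le hNpos.le
      (by exact_mod_cast (by omega : 0 < t))).mp hpow
  · -- ℓ ≥ 3
    have hk1 : 1 ≤ k := by omega
    have hkR : ((k:ℕ):ℝ) = (ℓ:ℝ) - 2 := by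
      rw [hk, Nat.cast_sub (by omega : 2 ≤ ℓ)]
      norm_num
    have hkne : ((k:ℕ):ℝ) ≠ 0 := by
      have : (0:ℝ) < k := by exact_mod_cast hk1
      exact this.ne'
    set A := (2:ℝ)^(t.choose 2) / (N:ℝ)^t with hA
    have hApos : 0 < A := by rw [hA]; positivity
    set α := A ^ ((1:ℝ)/k) with hα
    have hαpos : 0 < α := Real.rpow_pos_of_pos hApos _
    have hqbound : ∀ q ∈ {q : ℝ | ∃ M : ℕ, 0 < M ∧
        ∃ G : SimpleGraph (Fin M), G.CliqueFree t ∧ q = indepProb t G}, α ≤ q := by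
      rintro q ⟨M, hM, G, hG, rfl⟩
      have hq : 0 < indepProb t G := indepProb_pos hM G
      have h1 : A ≤ (indepProb t G) ^ ((k:ℕ):ℝ) := by
        rw [Real.rpow_natCast, hA, div_le_iff₀ (by positivity)]
        calc (2:ℝ)^(t.choose 2) ≤ (N:ℝ)^t * (indepProb t G)^k := key M hM G hG
          _ = (indepProb t G)^k * (N:ℝ)^t := by ring
      calc α = A ^ ((1:ℝ)/k) := hα
        _ ≤ ((indepProb t G) ^ ((k:ℕ):ℝ)) ^ ((1:ℝ)/k) :=
            Real.rpow_le_rpow hApos.le h1 (by positivity)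
        _ = indepProb t G := by
            rw [← Real.rpow_mul hq.le,
              show ((k:ℕ):ℝ) * ((1:ℝ)/k) = 1 from by field_simp, Real.rpow_one]
    have hcα : α ≤ cParam t := by
      rw [cParam]
      exact le_csInf (cParam_set_nonempty t ht) hqbound
    have he : -((ℓ:ℝ)-2)/(t:ℝ) ≤ 0 := by
      apply div_nonpos_of_nonpos_of_nonneg
      · simp only [neg_nonpos, sub_nonneg]
        exact_mod_cast hℓ
      · positivity
    have hmono : cParam t ^ (-((ℓ:ℝ)-2)/(t:ℝ)) ≤ α ^ (-((ℓ:ℝ)-2)/(t:ℝ)) :=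
      Real.rpow_le_rpow_of_nonpos hαpos hcα he
    have hexp' : (1:ℝ)/k * (-((ℓ:ℝ)-2)/t) = -(1:ℝ)/t := by
      rw [← hkR]
      field_simp
    have hNβ : A ^ (-(1:ℝ)/t) = (N:ℝ)/β := by
      rw [hA, Real.div_rpow (by positivity) (by positivity)]
      have h1 : ((2:ℝ)^(t.choose 2)) ^ (-(1:ℝ)/t) = β⁻¹ := by
        rw [← Real.rpow_natCast (2:ℝ) (t.choose 2),
          ← Real.rpow_mul (by norm_num : (0:ℝ) ≤ 2), hβ,
          ← Real.rpow_neg (by norm_num : (0:ℝ) ≤ 2)]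
        congr 1
        rw [h2c]
        field_simp
      have h2 : ((N:ℝ)^t) ^ (-(1:ℝ)/t) = (N:ℝ)⁻¹ := by
        rw [← Real.rpow_natCast (N:ℝ) t, ← Real.rpow_mul hNpos.le,
          show (t:ℝ) * (-(1:ℝ)/t) = -1 from by field_simp, Real.rpow_neg_one]
      rw [h1, h2]
      field_simp
    have hαe : α ^ (-((ℓ:ℝ)-2)/(t:ℝ)) = (N:ℝ)/β := by
      rw [hα, ← Real.rpow_mul hApos.le, hexp', hNβ]
    calc cParam t ^ (-((ℓ:ℝ)-2)/(t:ℝ)) * β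
        ≤ α ^ (-((ℓ:ℝ)-2)/(t:ℝ)) * β := by
          exact mul_le_mul_of_nonneg_right hmono hβpos.le
      _ = ((N:ℝ)/β) * β := by rw [hαe]
      _ = (N:ℝ) := div_mul_cancel₀ _ hβpos.ne'
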